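/- For z > 0, the Taylor expansion h(z) = ∑_{n=0}^∞ ((-1)^n n!/(2n+1)!) z^n holds, where h(z) := ∫_0^1 e^{-α(1-α)z} dα, and this series converges for all z ∈ ℂ. -/

import Mathlib

open Real MeasureTheory

lemma beta_nat (n : ℕ) : ∫ x in (0:ℝ)..1, x^n * (1-x)^n
    = (n.factorial : ℝ)^2 / ((2*n+1).factorial : ℝ) := by
  have hre : 0 < Complex.re ((n:ℂ)+1) := by simp; positivity
  have h := Complex.Gamma_mul_Gamma_eq_betaIntegral hre hre
  rw [Complex.Gamma_nat_eq_factorial] at h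
  have h2 : ((n:ℂ)+1) + ((n:ℂ)+1) = ((2*n+1 : ℕ):ℂ) + 1 := by push_cast; ring
  rw [h2, Complex.Gamma_nat_eq_factorial] at h
  have h3 : Complex.betaIntegral ((n:ℂ)+1) ((n:ℂ)+1)
      = ((∫ x in (0:ℝ)..1, x^n * (1-x)^n : ℝ) : ℂ) := by
    rw [Complex.betaIntegral]
    rw [← intervalIntegral.integral_ofReal]
    apply intervalIntegral.integral_congr
    intro x hx
    push_cast
    simp [add_sub_cancel_right, Complex.cpow_natCast]
  rw [h3] at h
  have h' : ((n.factorial : ℝ) * n.factorial) = ((2*n+1).factorial : ℝ) * ∫ x in (0:ℝ)..1, x^n * (1-x)^n := by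
    exact_mod_cast h
  have hpos : (0:ℝ) < (2*n+1).factorial := by positivity
  field_simp
  nlinarith [h']

lemma fact_ratio_le (n : ℕ) : (n.factorial : ℝ) / ((2*n+1).factorial : ℝ) ≤ 1 / n.factorial := by
  rw [div_le_div_iff₀ (by positivity) (by positivity), one_mul]
  have : n.factorial * n.factorial ≤ (2*n+1).factorial := by
    calc n.factorial * n.factorial ≤ (n+n).factorial :=
          Nat.le_of_dvd (Nat.factorial_pos _) (Nat.factorial_mul_factorial_dvd_factorial_add n n)
      _ ≤ (2*n+1).factorial := Nat.factorial_le (by omega)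
  exact_mod_cast this

theorem BV_form_factor_taylor :
    (∀ z : ℝ, 0 < z →
      HasSum (fun n : ℕ => ((-1 : ℝ) ^ n * (n.factorial : ℝ) / ((2 * n + 1).factorial : ℝ)) * z ^ n)
        (∫ α in (0:ℝ)..1, Real.exp (-α * (1 - α) * z))) ∧
    (∀ z : ℂ, Summable
      (fun n : ℕ => ((-1 : ℂ) ^ n * (n.factorial : ℂ) / ((2 * n + 1).factorial : ℂ)) * z ^ n)) := by
  constructor
  · intro z hz
    set F : ℕ → ℝ → ℝ := fun n α => (-α * (1 - α) * z) ^ n / n.factorial with hF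
    have hcont : ∀ n, Continuous (F n) := by
      intro n; fun_prop
    have hsum_pt : ∀ α : ℝ, HasSum (fun n => F n α) (Real.exp (-α * (1 - α) * z)) := by
      intro α
      rw [Real.exp_eq_exp_ℝ]
      exact NormedSpace.expSeries_div_hasSum_exp _
    have hint : ∀ n, IntegrableOn (F n) (Set.Ioc 0 1) volume :=
      fun n => (hcont n).integrableOn_Ioc
    have hbound : ∀ n, (∫ α in Set.Ioc (0:ℝ) 1, ‖F n α‖) ≤ z ^ n / n.factorial := by
      intro n
      have h1 : (∫ α in Set.Ioc (0:ℝ) 1, ‖F n α‖) ≤ ∫ _ in Set.Ioc (0:ℝ) 1, z ^ n / n.factorial := by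
        apply setIntegral_mono_on ((hint n).norm) (integrableOn_const measure_Ioc_lt_top.ne)
          measurableSet_Ioc
        intro α hα
        have h1a : (0:ℝ) < α := hα.1
        have h2a : α ≤ 1 := hα.2
        have h0 : (0:ℝ) ≤ α * (1-α) * z := mul_nonneg (mul_nonneg h1a.le (by linarith)) hz.le
        simp only [hF, norm_div, norm_pow, Real.norm_eq_abs]
        rw [abs_of_nonpos (by nlinarith : -α*(1-α)*z ≤ 0), Nat.abs_cast]
        gcongr
        · nlinarith
        · nlinarith [sq_nonneg (2*α-1), hz.le]
      simpa using h1
    have hsummable : Summable (fun n => ∫ α in Set.Ioc (0:ℝ) 1, ‖F n α‖) := by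
      apply Summable.of_nonneg_of_le (fun n => integral_nonneg (fun a => norm_nonneg _)) hbound
      exact Real.summable_pow_div_factorial z
    have key := hasSum_integral_of_summable_integral_norm (μ := volume.restrict (Set.Ioc 0 1)) hint hsummable
    have hval : ∀ n, (∫ α in Set.Ioc (0:ℝ) 1, F n α)
        = ((-1 : ℝ) ^ n * (n.factorial : ℝ) / ((2 * n + 1).factorial : ℝ)) * z ^ n := by
      intro n
      have : (∫ α in Set.Ioc (0:ℝ) 1, F n α) = ∫ α in (0:ℝ)..1, F n α := by
        rw [intervalIntegral.integral_of_le zero_le_one]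
      rw [this]
      have : ∀ α : ℝ, F n α = ((-1:ℝ)^n * z^n / n.factorial) * (α^n * (1-α)^n) := by
        intro α
        simp only [hF]
        rw [show -α*(1-α)*z = (-1)*(α*((1-α)*z)) by ring, mul_pow, mul_pow, mul_pow]
        ring
      simp_rw [this]
      rw [intervalIntegral.integral_const_mul, beta_nat n]
      have hn : (n.factorial : ℝ) ≠ 0 := by positivity
      field_simp
    have heq : (∫ α in Set.Ioc (0:ℝ) 1, ∑' n, F n α) = ∫ α in (0:ℝ)..1, Real.exp (-α * (1 - α) * z) := by
      rw [intervalIntegral.integral_of_le zero_le_one]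
      apply setIntegral_congr_fun measurableSet_Ioc
      intro α _
      exact (hsum_pt α).tsum_eq
    rw [heq] at key
    convert key using 1
    · rfl
    funext n
    exact (hval n).symm
  · intro z
    apply Summable.of_norm
    refine Summable.of_nonneg_of_le (fun n => norm_nonneg _) ?_ (Real.summable_pow_div_factorial ‖z‖)
    intro n
    simp only [norm_mul, norm_div, norm_pow, norm_neg, norm_one, one_pow, one_mul,
      Complex.norm_natCast]
    calc (n.factorial : ℝ) / ((2*n+1).factorial : ℝ) * ‖z‖ ^ n
        ≤ 1 / n.factorial * ‖z‖ ^ n := mul_le_mul_of_nonneg_right (fact_ratio_le n) (by positivity)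
      _ = ‖z‖ ^ n / n.factorial := by ring
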